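/- Let K be a field of characteristic p > 0, let m > 0, and let ∂ = (∂_n)_{0 ≤ n < p^m} be a multiplicatively iterative m-truncated HS-derivation (a G_m[m]-derivation) on K such that ∂_1 is not the zero map. Then there exists x ∈ K such that ∂_1(x) = x + 1, x + 1 ≠ 0, and ∂_n(x) = 0 for all n with 2 ≤ n ≤ p^m − 1. -/

import Mathlib

open Finset

/-- `D` is an `m`-truncated HS-derivation on `R` (for the prime `p`):
only the maps `D n` for `n < p ^ m` are relevant. -/
def IsTruncHSDeriv (p m : ℕ) {R : Type*} [CommRing R] (D : ℕ → R → R) : Prop :=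
  (∀ n, n < p ^ m → ∀ x y, D n (x + y) = D n x + D n y) ∧
  (∀ x, D 0 x = x) ∧
  (∀ n, n < p ^ m → ∀ x y, D n (x * y) = ∑ ij ∈ Finset.HasAntidiagonal.antidiagonal n, D ij.1 x * D ij.2 y)

/-- The coefficient `n! / ((n-i)!·(n-j)!·(i+j-n)!)` appearing in the multiplicative
iterativity rule. -/
def gmCoeff (i j n : ℕ) : ℕ :=
  n.factorial / ((n - i).factorial * ((n - j).factorial * (i + j - n).factorial))

/-- `D` is a multiplicatively iterative `m`-truncated HS-derivation
(a `G_m[m]`-derivation). -/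
def IsGmIterativeTrunc (p m : ℕ) {R : Type*} [CommRing R] (D : ℕ → R → R) : Prop :=
  ∀ i j : ℕ, i < p ^ m → j < p ^ m → ∀ x,
    D j (D i x) = ∑ n ∈ Finset.Icc (max i j) (min (i + j) (p ^ m - 1)), gmCoeff i j n • D n x

section GmAuxiliary

private lemma gm_T (i : ℕ) : ∀ j k : ℕ, j ≤ k →
    (∑ s ∈ Finset.range (j+1), (-1:ℤ)^s * (j.choose s) * ((k-s).choose i))
      = if j ≤ i then ((k-j).choose (i-j) : ℤ) else 0 := by
  intro j
  induction j with
  | zero => intro k _; simp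
  | succ j ih =>
    intro k hjk
    have hk1 : 1 ≤ k := le_trans (Nat.succ_le_succ (Nat.zero_le j)) hjk
    have hjk1 : j ≤ k - 1 := by omega
    have hjk0 : j ≤ k := by omega
    have hstep :
        (∑ s ∈ Finset.range (j+1+1), (-1:ℤ)^s * ((j+1).choose s) * ((k-s).choose i))
          = (∑ s ∈ Finset.range (j+1), (-1:ℤ)^(s+1) * (j.choose s) * ((k-1-s).choose i))
            + (∑ s ∈ Finset.range (j+1), (-1:ℤ)^s * (j.choose s) * ((k-s).choose i)) := by
      rw [Finset.sum_range_succ' (fun s => (-1:ℤ)^s * ((j+1).choose s) * ((k-s).choose i)) (j+1)]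
      have h1 : ∀ s ∈ Finset.range (j+1),
          (-1:ℤ)^(s+1) * ((j+1).choose (s+1)) * ((k-(s+1)).choose i)
            = (-1:ℤ)^(s+1) * (j.choose s) * ((k-1-s).choose i)
              + (-1:ℤ)^(s+1) * (j.choose (s+1)) * ((k-1-s).choose i) := by
        intro s _
        have : k - (s+1) = k - 1 - s := by omega
        rw [this, Nat.choose_succ_succ']
        push_cast; ring
      rw [Finset.sum_congr rfl h1, Finset.sum_add_distrib]
      have h2 : (∑ s ∈ Finset.range (j+1), (-1:ℤ)^(s+1) * (j.choose (s+1)) * ((k-1-s).choose i))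
          = (∑ s ∈ Finset.range (j+1), (-1:ℤ)^s * (j.choose s) * ((k-s).choose i))
            - ((k.choose i : ℤ)) := by
        rw [Finset.sum_range_succ' (fun s => (-1:ℤ)^s * (j.choose s) * ((k-s).choose i)) j]
        have h3 : (∑ s ∈ Finset.range (j+1), (-1:ℤ)^(s+1) * (j.choose (s+1)) * ((k-1-s).choose i))
            = (∑ s ∈ Finset.range j, (-1:ℤ)^(s+1) * (j.choose (s+1)) * ((k-1-s).choose i)) := by
          rw [Finset.sum_range_succ]
          simp [Nat.choose_succ_self]
        rw [h3]
        have h4 : ∀ s ∈ Finset.range j,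
            (-1:ℤ)^(s+1) * (j.choose (s+1)) * ((k-1-s).choose i)
              = (-1:ℤ)^(s+1) * (j.choose (s+1)) * ((k-(s+1)).choose i) := by
          intro s _
          have : k - (s+1) = k - 1 - s := by omega
          rw [this]
        rw [Finset.sum_congr rfl h4]
        simp
      rw [h2]
      simp only [Nat.choose_zero_right, Nat.sub_zero, Nat.cast_one, pow_zero, one_mul, mul_one]
      ring
    have hneg : (∑ s ∈ Finset.range (j+1), (-1:ℤ)^(s+1) * (j.choose s) * ((k-1-s).choose i))
        = -(∑ s ∈ Finset.range (j+1), (-1:ℤ)^s * (j.choose s) * ((k-1-s).choose i)) := by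
      rw [← Finset.sum_neg_distrib]
      exact Finset.sum_congr rfl (fun s _ => by ring)
    rw [hstep, hneg, ih (k-1) hjk1, ih k hjk0]
    by_cases h5 : j + 1 ≤ i
    · have h6 : j ≤ i := by omega
      rw [if_pos h5, if_pos h6, if_pos h6]
      have ha : k - j = (k - (j+1)) + 1 := by omega
      have hb : i - j = (i - (j+1)) + 1 := by omega
      have hc : k - 1 - j = k - (j+1) := by omega
      rw [ha, hb, hc, Nat.choose_succ_succ]
      push_cast; ring
    · by_cases h6 : j ≤ i
      · have h7 : i = j := by omega
        rw [if_neg h5, if_pos h6, if_pos h6, h7]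
        simp
      · rw [if_neg h5, if_neg h6, if_neg h6]; ring

private lemma gmCoeff_eq (n j k : ℕ) (h1 : n ≤ k) (h2 : j ≤ k) (h3 : k ≤ n + j) :
    gmCoeff n j k = k.choose j * j.choose (k - n) := by
  have h4 : k - n ≤ j := by omega
  have e1 := Nat.choose_mul_factorial_mul_factorial h2
  have e2 := Nat.choose_mul_factorial_mul_factorial h4
  have h5 : j - (k - n) = n + j - k := by omega
  rw [h5] at e2
  have key : k.factorial
      = (k.choose j * j.choose (k - n)) * ((k - n).factorial
          * ((k - j).factorial * (n + j - k).factorial)) := by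
    rw [← e1, ← e2]; ring
  rw [gmCoeff, key, Nat.mul_div_cancel _ (by positivity)]

private lemma gm_C (q i j k : ℕ) (hk : k < q) :
    (∑ n ∈ Finset.range q, if n ≤ k ∧ j ≤ k ∧ k ≤ n + j
        then ((-1:ℤ)^(n+i) * (n.choose i)) * (gmCoeff n j k : ℤ) else 0)
      = (i.choose j : ℤ) * ((-1)^(k+i) * (k.choose i)) := by
  by_cases hjk : j ≤ k
  · have hfilter : (Finset.range q).filter (fun n => n ≤ k ∧ j ≤ k ∧ k ≤ n + j)
        = Finset.Icc (k - j) k := by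
      ext n; simp only [Finset.mem_filter, Finset.mem_range, Finset.mem_Icc]; omega
    rw [← Finset.sum_filter, hfilter]
    have himg : Finset.Icc (k - j) k = Finset.image (fun s => k - s) (Finset.range (j+1)) := by
      ext n; simp only [Finset.mem_Icc, Finset.mem_image, Finset.mem_range]
      constructor
      · intro h; exact ⟨k - n, by omega, by omega⟩
      · rintro ⟨s, hs, rfl⟩; omega
    rw [himg, Finset.sum_image (by
      intro x hx y hy h
      simp only [Finset.mem_coe, Finset.mem_range] at hx hy h
      omega)]
    have hterm : ∀ s ∈ Finset.range (j+1),
        ((-1:ℤ)^((k-s)+i) * (((k-s).choose i : ℕ) : ℤ)) * (gmCoeff (k-s) j k : ℤ)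
          = ((k.choose j : ℤ) * (-1)^(k+i)) * ((-1:ℤ)^s * (j.choose s) * ((k-s).choose i)) := by
      intro s hs
      simp only [Finset.mem_range] at hs
      rw [gmCoeff_eq (k-s) j k (by omega) hjk (by omega)]
      have hkk : k - (k - s) = s := by omega
      rw [hkk]
      have h7 : k + i + s = ((k-s)+i) + 2*s := by omega
      have hsign : (-1:ℤ)^((k-s)+i) = (-1)^(k+i) * (-1)^s := by
        calc (-1:ℤ)^((k-s)+i) = (-1:ℤ)^((k-s)+i) * ((-1:ℤ)^2)^s := by norm_num
          _ = (-1:ℤ)^(((k-s)+i) + 2*s) := by rw [← pow_mul, ← pow_add]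
          _ = (-1:ℤ)^(k+i+s) := by rw [← h7]
          _ = (-1:ℤ)^(k+i) * (-1:ℤ)^s := by rw [pow_add]
      rw [hsign]; push_cast; ring
    rw [Finset.sum_congr rfl hterm, ← Finset.mul_sum, gm_T i j k hjk]
    by_cases h6 : j ≤ i
    · rw [if_pos h6]
      by_cases h8 : i ≤ k
      · have hcm := Nat.choose_mul (n := k) h6
        have hc : (k.choose j : ℤ) * ((k-j).choose (i-j)) = (k.choose i : ℤ) * (i.choose j) := by
          exact_mod_cast hcm.symm
        linear_combination ((-1:ℤ)^(k+i)) * hc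
      · have z1 : k.choose i = 0 := Nat.choose_eq_zero_of_lt (by omega)
        have z2 : (k-j).choose (i-j) = 0 := Nat.choose_eq_zero_of_lt (by omega)
        rw [z1, z2]; push_cast; ring
    · rw [if_neg h6]
      have z : i.choose j = 0 := Nat.choose_eq_zero_of_lt (by omega)
      rw [z]; push_cast; ring
  · rw [Finset.sum_eq_zero (fun n _ => by
      rw [if_neg (by intro h; exact hjk h.2.1)])]
    by_cases h8 : i ≤ k
    · have z : i.choose j = 0 := Nat.choose_eq_zero_of_lt (by omega)
      rw [z]; push_cast; ring
    · have z : k.choose i = 0 := Nat.choose_eq_zero_of_lt (by omega)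
      rw [z]; push_cast; ring

private lemma gm_L0 (p : ℕ) (hp : p.Prime) : ∀ l s t : ℕ, t < p ^ l →
    ((p ^ l * s).choose t : ZMod p) = if t = 0 then 1 else 0 := by
  haveI : Fact p.Prime := ⟨hp⟩
  intro l
  induction l with
  | zero =>
    intro s t ht
    have ht0 : t = 0 := by simpa using ht
    simp [ht0]
  | succ l ih =>
    intro s t ht
    have hmod := (Choose.choose_modEq_choose_mod_mul_choose_div_nat
      (p := p) (n := p ^ (l+1) * s) (k := t))
    have h1 : (p ^ (l+1) * s) % p = 0 := by
      have : p ∣ p ^ (l+1) * s := Dvd.dvd.mul_right (dvd_pow_self p (by omega)) s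
      omega
    have h2 : (p ^ (l+1) * s) / p = p ^ l * s := by
      rw [pow_succ, mul_comm (p ^ l) p, mul_assoc, Nat.mul_div_cancel_left _ hp.pos]
    rw [h1, h2] at hmod
    have hcast : ((p ^ (l+1) * s).choose t : ZMod p)
        = ((Nat.choose 0 (t % p) * Nat.choose (p ^ l * s) (t / p) : ℕ) : ZMod p) :=
      (ZMod.natCast_eq_natCast_iff _ _ _).mpr hmod
    rw [hcast]
    push_cast
    rw [ih s (t / p) ((Nat.div_lt_iff_lt_mul hp.pos).mpr (by rw [← pow_succ]; exact ht))]
    by_cases h0 : t = 0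
    · simp [h0]
    · rw [if_neg h0]
      by_cases hm : t % p = 0
      · have hd : t / p ≠ 0 := by
          intro h
          apply h0
          have h9 := Nat.div_add_mod t p
          rw [h] at h9
          omega
        rw [if_neg hd]; ring
      · have hz0 : Nat.choose 0 (t % p) = 0 := Nat.choose_eq_zero_of_lt (by omega)
        rw [hz0]
        push_cast; ring

private lemma gm_L1 (p : ℕ) (hp : p.Prime) (m : ℕ) (hm : 0 < m) (s n : ℕ) (hn : n < p ^ m) :
    ((1 + p ^ m * s).choose n : ZMod p) = (Nat.choose 1 n : ZMod p) := by
  haveI : Fact p.Prime := ⟨hp⟩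
  have hmod := (Choose.choose_modEq_choose_mod_mul_choose_div_nat
    (p := p) (n := 1 + p ^ m * s) (k := n))
  have hp2 : 2 ≤ p := hp.two_le
  have h1 : (1 + p ^ m * s) % p = 1 := by
    have : p ∣ p ^ m * s := Dvd.dvd.mul_right (dvd_pow_self p (by omega)) s
    obtain ⟨c, hc⟩ := this
    rw [hc, Nat.add_mul_mod_self_left, Nat.mod_eq_of_lt (by omega)]
  have h2 : (1 + p ^ m * s) / p = p ^ (m-1) * s := by
    have hps : p ^ m = p * p ^ (m-1) := by
      rw [← pow_succ']
      congr 1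
      omega
    rw [hps, mul_assoc, Nat.add_mul_div_left _ _ hp.pos, Nat.div_eq_of_lt (by omega)]
    omega
  rw [h1, h2] at hmod
  have hcast : ((1 + p ^ m * s).choose n : ZMod p)
      = ((Nat.choose 1 (n % p) * Nat.choose (p ^ (m-1) * s) (n / p) : ℕ) : ZMod p) :=
    (ZMod.natCast_eq_natCast_iff _ _ _).mpr hmod
  rw [hcast]
  push_cast
  rw [gm_L0 p hp (m-1) s (n / p) (by
    rw [Nat.div_lt_iff_lt_mul hp.pos]
    calc n < p ^ m := hn
      _ = p ^ (m-1) * p := by rw [← pow_succ]; congr 1; omega)]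
  by_cases hd : n / p = 0
  · have hnp : n < p := by
      rw [Nat.div_eq_zero_iff] at hd
      omega
    rw [if_pos hd, Nat.mod_eq_of_lt hnp]; ring
  · rw [if_neg hd]
    have hnge : p ≤ n := by
      by_contra h
      exact hd (Nat.div_eq_of_lt (by omega))
    have hz : Nat.choose 1 n = 0 := Nat.choose_eq_zero_of_lt (by omega)
    rw [hz]
    push_cast; ring

private def gmE (q : ℕ) {K : Type*} [Field K] (d : ℕ → K → K) (i : ℕ) (x : K) : K :=
  ∑ n ∈ Finset.range q, ((-1:ℤ)^(n+i) * (n.choose i : ℤ)) • d n x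

variable {K : Type*} [Field K]

private lemma gm_hom {q : ℕ} {d : ℕ → K → K}
    (hadd : ∀ n, n < q → ∀ x y : K, d n (x + y) = d n x + d n y) {j : ℕ} (hj : j < q) :
    ∃ f : K →+ K, ∀ x, f x = d j x :=
  ⟨AddMonoidHom.mk' (d j) (hadd j hj), fun _ => rfl⟩

private lemma gm_dsum {q : ℕ} {d : ℕ → K → K}
    (hadd : ∀ n, n < q → ∀ x y : K, d n (x + y) = d n x + d n y) {j : ℕ} (hj : j < q)
    (s : Finset ℕ) (g : ℕ → K) : d j (∑ n ∈ s, g n) = ∑ n ∈ s, d j (g n) := by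
  obtain ⟨f, hf⟩ := gm_hom hadd hj
  rw [← hf, map_sum]
  exact Finset.sum_congr rfl (fun n _ => hf (g n))

private lemma gm_dzsmul {q : ℕ} {d : ℕ → K → K}
    (hadd : ∀ n, n < q → ∀ x y : K, d n (x + y) = d n x + d n y) {j : ℕ} (hj : j < q)
    (c : ℤ) (x : K) : d j (c • x) = c • d j x := by
  obtain ⟨f, hf⟩ := gm_hom hadd hj
  rw [← hf, map_zsmul, hf]

private lemma gm_dsub {q : ℕ} {d : ℕ → K → K}
    (hadd : ∀ n, n < q → ∀ x y : K, d n (x + y) = d n x + d n y) {j : ℕ} (hj : j < q)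
    (x y : K) : d j (x - y) = d j x - d j y := by
  obtain ⟨f, hf⟩ := gm_hom hadd hj
  rw [← hf, map_sub, hf, hf]

private lemma gmE_eigen {q : ℕ} (hq : 0 < q) {d : ℕ → K → K}
    (hadd : ∀ n, n < q → ∀ x y : K, d n (x + y) = d n x + d n y)
    (hiter : ∀ i j : ℕ, i < q → j < q → ∀ x,
      d j (d i x) = ∑ n ∈ Finset.Icc (max i j) (min (i + j) (q - 1)), gmCoeff i j n • d n x)
    {i j : ℕ} (hi : i < q) (hj : j < q) (x : K) :
    d j (gmE q d i x) = (i.choose j : ℤ) • gmE q d i x := by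
  simp only [gmE]
  rw [gm_dsum hadd hj]
  have step1 : ∀ n ∈ Finset.range q, d j (((-1:ℤ)^(n+i) * (n.choose i : ℤ)) • d n x)
      = ∑ k ∈ Finset.range q, (if n ≤ k ∧ j ≤ k ∧ k ≤ n + j
          then ((-1:ℤ)^(n+i) * (n.choose i)) * (gmCoeff n j k : ℤ) else 0) • d k x := by
    intro n hn
    rw [Finset.mem_range] at hn
    rw [gm_dzsmul hadd hj, hiter n j hn hj x]
    have hIcc : Finset.Icc (max n j) (min (n + j) (q - 1))
        = (Finset.range q).filter (fun k => n ≤ k ∧ j ≤ k ∧ k ≤ n + j) := by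
      ext k
      simp only [Finset.mem_Icc, Finset.mem_filter, Finset.mem_range, le_min_iff, max_le_iff]
      omega
    rw [hIcc, Finset.sum_filter, Finset.smul_sum]
    refine Finset.sum_congr rfl (fun k hk => ?_)
    by_cases hc : n ≤ k ∧ j ≤ k ∧ k ≤ n + j
    · rw [if_pos hc, if_pos hc, ← natCast_zsmul (d k x) (gmCoeff n j k), smul_smul]
    · rw [if_neg hc, if_neg hc, smul_zero, zero_smul]
  rw [Finset.sum_congr rfl step1, Finset.sum_comm, Finset.smul_sum]
  refine Finset.sum_congr rfl (fun k hk => ?_)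
  rw [← Finset.sum_smul, gm_C q i j k (Finset.mem_range.mp hk), mul_smul]

private lemma gmE_total {q : ℕ} (hq : 0 < q) {d : ℕ → K → K}
    (hzero : ∀ x : K, d 0 x = x) (x : K) :
    ∑ i ∈ Finset.range q, gmE q d i x = x := by
  simp only [gmE]
  rw [Finset.sum_comm]
  have hco : ∀ n ∈ Finset.range q,
      (∑ i ∈ Finset.range q, ((-1:ℤ)^(n+i) * (n.choose i : ℤ)) • d n x)
        = (if n = 0 then (1:ℤ) else 0) • d n x := by
    intro n hn
    rw [Finset.mem_range] at hn
    rw [← Finset.sum_smul]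
    congr 1
    have hsub : (∑ i ∈ Finset.range q, ((-1:ℤ)^(n+i) * (n.choose i : ℤ)))
        = ∑ i ∈ Finset.range (n+1), ((-1:ℤ)^(n+i) * (n.choose i : ℤ)) := by
      symm
      apply Finset.sum_subset (Finset.range_subset_range.mpr (by omega))
      intro k _ hk
      rw [Finset.mem_range] at hk
      push_neg at hk
      rw [Nat.choose_eq_zero_of_lt (by omega)]
      ring
    rw [hsub]
    have hfac : ∀ i ∈ Finset.range (n+1), ((-1:ℤ)^(n+i) * (n.choose i : ℤ))
        = (-1:ℤ)^n * ((-1:ℤ)^i * (n.choose i : ℤ)) := by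
      intro i _
      rw [pow_add]; ring
    rw [Finset.sum_congr rfl hfac, ← Finset.mul_sum, Int.alternating_sum_range_choose]
    rcases Nat.eq_zero_or_pos n with h | h
    · simp [h]
    · rw [if_neg (by omega : ¬ n = 0)]; ring
  rw [Finset.sum_congr rfl hco, Finset.sum_eq_single_of_mem 0 (Finset.mem_range.mpr hq)]
  · rw [if_pos rfl, one_smul, hzero]
  · intro n _ hne
    rw [if_neg hne, zero_smul]

private lemma gm_done1 {q : ℕ} {d : ℕ → K → K}
    (hzero : ∀ x : K, d 0 x = x)
    (hmul : ∀ n, n < q → ∀ x y : K,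
      d n (x * y) = ∑ ij ∈ Finset.HasAntidiagonal.antidiagonal n, d ij.1 x * d ij.2 y) :
    ∀ n, 1 ≤ n → n < q → d n (1 : K) = 0 := by
  intro n
  induction n using Nat.strong_induction_on with
  | _ n ih =>
    intro h1 hn
    have hm1 := hmul n hn 1 1
    rw [mul_one, Finset.Nat.sum_antidiagonal_eq_sum_range_succ_mk,
      Finset.sum_range_succ] at hm1
    have hrest : (∑ i ∈ Finset.range n, d i (1:K) * d (n - i) (1:K)) = d n (1:K) := by
      rw [Finset.sum_eq_single_of_mem 0 (Finset.mem_range.mpr (by omega))]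
      · rw [hzero, Nat.sub_zero, one_mul]
      · intro i hi hne
        rw [Finset.mem_range] at hi
        rw [ih i hi (by omega) (by omega), zero_mul]
    rw [hrest, Nat.sub_self, hzero, mul_one] at hm1
    linear_combination -hm1

private lemma gm_pow {q : ℕ} {d : ℕ → K → K}
    (hzero : ∀ x : K, d 0 x = x)
    (hmul : ∀ n, n < q → ∀ x y : K,
      d n (x * y) = ∑ ij ∈ Finset.HasAntidiagonal.antidiagonal n, d ij.1 x * d ij.2 y)
    (y : K) (N : ℕ) (hy : ∀ n, n < q → d n y = (N.choose n : K) * y) :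
    ∀ (j : ℕ) (n : ℕ), n < q → d n (y ^ j) = ((N * j).choose n : K) * y ^ j := by
  intro j
  induction j with
  | zero =>
    intro n hn
    rw [pow_zero, Nat.mul_zero]
    rcases Nat.eq_zero_or_pos n with h | h
    · rw [h, hzero]; simp
    · rw [gm_done1 hzero hmul n h hn, Nat.choose_eq_zero_of_lt h]
      simp
  | succ j ihj =>
    intro n hn
    rw [pow_succ, hmul n hn (y ^ j) y]
    have hterm : ∀ ab ∈ Finset.HasAntidiagonal.antidiagonal n, d ab.1 (y ^ j) * d ab.2 y
        = (((N * j).choose ab.1 * N.choose ab.2 : ℕ) : K) * (y ^ j * y) := by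
      intro ab hab
      rw [Finset.HasAntidiagonal.mem_antidiagonal] at hab
      rw [ihj ab.1 (by omega), hy ab.2 (by omega)]
      push_cast; ring
    rw [Finset.sum_congr rfl hterm, ← Finset.sum_mul]
    congr 1
    rw [show N * (j + 1) = N * j + N from by ring, Nat.add_choose_eq]
    push_cast
    rfl

end GmAuxiliary

/-- A `G_m[m]`-derivation on a field of characteristic `p > 0` with `d 1 ≠ 0` admits a
canonical element: an `x` with `d 1 x = x + 1 ≠ 0` and `d n x = 0` for
`2 ≤ n ≤ p ^ m - 1`. -/
theorem gm_trunc_canonical_element (p : ℕ) (hp : p.Prime) (m : ℕ) (hm : 0 < m)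
    (K : Type*) [Field K] [CharP K p]
    (d : ℕ → K → K)
    (hd : IsTruncHSDeriv p m d)
    (hiter : IsGmIterativeTrunc p m d)
    (hne : d 1 ≠ 0) :
    ∃ x : K, d 1 x = x + 1 ∧ x + 1 ≠ 0 ∧
      ∀ n : ℕ, 2 ≤ n → n ≤ p ^ m - 1 → d n x = 0 := by
  obtain ⟨hadd, hzero, hmul⟩ := hd
  have hiter' : ∀ a b : ℕ, a < p ^ m → b < p ^ m → ∀ x,
      d b (d a x) = ∑ n ∈ Finset.Icc (max a b) (min (a + b) (p ^ m - 1)),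
        gmCoeff a b n • d n x := hiter
  have hp2 : 2 ≤ p := hp.two_le
  have hq1 : 1 < p ^ m := by
    calc 1 < p := by omega
    _ ≤ p ^ m := Nat.le_self_pow (by omega) p
  have hq0 : 0 < p ^ m := by omega
  obtain ⟨x0, hx0⟩ : ∃ x0 : K, d 1 x0 ≠ 0 := by
    by_contra h
    push_neg at h
    exact hne (funext h)
  have key : d 1 x0
      = ∑ i ∈ Finset.range (p ^ m), (i.choose 1 : ℤ) • gmE (p ^ m) d i x0 := by
    conv_lhs => rw [← gmE_total hq0 hzero x0]
    rw [gm_dsum hadd hq1]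
    exact Finset.sum_congr rfl
      (fun i hi => gmE_eigen hq0 hadd hiter' (Finset.mem_range.mp hi) hq1 x0)
  have hex : ∃ i ∈ Finset.range (p ^ m), (i.choose 1 : ℤ) • gmE (p ^ m) d i x0 ≠ 0 := by
    by_contra h
    push_neg at h
    exact hx0 (key.trans (Finset.sum_eq_zero h))
  obtain ⟨i, hi, hterm⟩ := hex
  have hiq : i < p ^ m := Finset.mem_range.mp hi
  set y : K := gmE (p ^ m) d i x0 with hydef
  have hyne : y ≠ 0 := by
    intro h
    exact hterm (by rw [h, smul_zero])
  have hpi : ¬ p ∣ i := by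
    intro hdvd
    apply hterm
    rw [Nat.choose_one_right, zsmul_eq_mul, Int.cast_natCast,
      (CharP.cast_eq_zero_iff K p i).mpr hdvd, zero_mul]
  have hy : ∀ n, n < p ^ m → d n y = (i.choose n : K) * y := by
    intro n hn
    rw [hydef, gmE_eigen hq0 hadd hiter' hiq hn x0, zsmul_eq_mul, Int.cast_natCast]
  have hcop : Nat.Coprime i (p ^ m) :=
    ((Nat.Prime.coprime_iff_not_dvd hp).mpr hpi).symm.pow_right m
  obtain ⟨t, -, ht⟩ := Nat.exists_mul_mod_eq_one_of_coprime hcop hq1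
  have hit : i * t = 1 + p ^ m * (i * t / p ^ m) := by
    have h9 := Nat.div_add_mod (i * t) (p ^ m)
    omega
  have hu : ∀ n, n < p ^ m → d n (y ^ t) = (Nat.choose 1 n : K) * y ^ t := by
    intro n hn
    rw [gm_pow hzero hmul y i hy t n hn]
    congr 1
    have hz := gm_L1 p hp m hm (i * t / p ^ m) n hn
    rw [← hit] at hz
    have e1 := map_natCast (ZMod.castHom (dvd_refl p) K) ((i * t).choose n)
    have e2 := map_natCast (ZMod.castHom (dvd_refl p) K) (Nat.choose 1 n)
    rw [← e1, ← e2, hz]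
  have hune : y ^ t ≠ 0 := pow_ne_zero t hyne
  refine ⟨y ^ t - 1, ?_, ?_, ?_⟩
  · rw [gm_dsub hadd hq1, gm_done1 hzero hmul 1 le_rfl hq1, hu 1 hq1]
    norm_num
  · have hcan : y ^ t - 1 + 1 = y ^ t := by ring
    rw [hcan]
    exact hune
  · intro n h2 hn'
    have hn : n < p ^ m := by omega
    rw [gm_dsub hadd hn, gm_done1 hzero hmul n (by omega) hn, hu n hn,
      Nat.choose_eq_zero_of_lt (show 1 < n by omega)]
    simp
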